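/- arXiv:0812.4964 — 4 statements merged into one kernel-verified Lean document; each statement's English description precedes it below -/
import Mathlib

section
/- Let n ≥ 0, let b_0,…,b_n be positive integers, and set P_b = ∏_{k=0}^{n}(1 − u^{−b_k}) in ℤ[u,u⁻¹]. Then the quotient ring ℤ[u,u⁻¹]/⟨P_b⟩ is torsion-free as an additive abelian group: for every nonzero integer m and every element f of the quotient, m·f = 0 implies f = 0. -/
open LaurentPolynomial

/-- The monoid hom `Multiplicative ℤ →* R[T;T⁻¹]`, `n ↦ T n`. -/
noncomputable def TmonAux (S : Type*) [CommRing S] : Multiplicative ℤ →* LaurentPolynomial S where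
  toFun n := T (Multiplicative.toAdd n)
  map_one' := T_zero
  map_mul' _ _ := T_add _ _

/-- Reduction of coefficients: `ℤ[T;T⁻¹] →+* S[T;T⁻¹]`. -/
noncomputable def phiAux (S : Type*) [CommRing S] :
    LaurentPolynomial ℤ →+* LaurentPolynomial S :=
  AddMonoidAlgebra.liftNCRingHom ((C : S →+* _).comp (Int.castRingHom S)) (TmonAux S)
    (fun _ _ => Commute.all _ _)

lemma phiAux_single (S : Type*) [CommRing S] (a : ℤ) (c : ℤ) :
    phiAux S (AddMonoidAlgebra.single a c) = AddMonoidAlgebra.single a ((c : S)) := by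
  show AddMonoidAlgebra.liftNC _ _ _ = _
  rw [AddMonoidAlgebra.liftNC_single, single_eq_C_mul_T]
  rfl

lemma phiAux_apply (S : Type*) [CommRing S] (x : LaurentPolynomial ℤ) (a : ℤ) :
    (phiAux S x).coeff a = ((x.coeff a : ℤ) : S) := by
  induction x using AddMonoidAlgebra.induction_linear with
  | zero => simp
  | add f g hf hg =>
      rw [map_add]
      show ((phiAux S f).coeff a) + ((phiAux S g).coeff a) = (((f.coeff a) + (g.coeff a) : ℤ) : S)
      rw [hf, hg]; push_cast; ring
  | single a' c =>
      rw [phiAux_single]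
      show (Finsupp.single a' ((c : S)) : ℤ →₀ S) a
        = (((Finsupp.single a' c : ℤ →₀ ℤ) a : ℤ) : S)
      rw [Finsupp.single_apply, Finsupp.single_apply]
      split <;> simp

lemma phiAux_T (S : Type*) [CommRing S] (a : ℤ) : phiAux S (T a) = T a := by
  show phiAux S (AddMonoidAlgebra.single a 1) = _
  rw [phiAux_single, Int.cast_one]; rfl

lemma one_sub_T_ne_zero (S : Type*) [CommRing S] [Nontrivial S] (b : ℤ) (hb : b ≠ 0) :
    (1 : LaurentPolynomial S) - T b ≠ 0 := by
  intro h
  have h0 : ((1 - T b : LaurentPolynomial S)).coeff 0 = 0 := by rw [h]; rfl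
  have h1 : ((1 - T b : LaurentPolynomial S)).coeff 0 = 1 := by
    show (1 : LaurentPolynomial S).coeff 0 - (T b : LaurentPolynomial S).coeff 0 = 1
    rw [← T_zero, T_apply, T_apply]
    simp [hb]
  rw [h0] at h1
  exact zero_ne_one h1

/-- If all coefficients of `x` reduce to zero mod `p`, then `x` is `p` times something. -/
lemma exists_of_phiAux_eq_zero (p : ℕ) [NeZero p] (x : LaurentPolynomial ℤ)
    (hx : phiAux (ZMod p) x = 0) : ∃ y : LaurentPolynomial ℤ, x = (p : ℤ) • y := by
  refine ⟨AddMonoidAlgebra.ofCoeff (Finsupp.mapRange (· / (p : ℤ)) (by simp) x.coeff), ?_⟩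
  ext a
  have hcoeff : ((x.coeff a : ℤ) : ZMod p) = 0 := by
    rw [← phiAux_apply, hx]; rfl
  have hdvd : (p : ℤ) ∣ x.coeff a := (ZMod.intCast_zmod_eq_zero_iff_dvd _ _).mp hcoeff
  show x.coeff a = ((p : ℤ) • Finsupp.mapRange (· / (p : ℤ)) (by simp) x.coeff) a
  rw [Finsupp.smul_apply, Finsupp.mapRange_apply, smul_eq_mul,
    Int.mul_ediv_cancel' hdvd]

lemma key_aux (P : LaurentPolynomial ℤ)
    (hP : ∀ p : ℕ, p.Prime → phiAux (ZMod p) P ≠ 0) :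
    ∀ N : ℕ, ∀ m : ℤ, m.natAbs = N → m ≠ 0 →
      ∀ g h : LaurentPolynomial ℤ, m • g = P * h → P ∣ g := by
  intro N
  induction N using Nat.strong_induction_on with
  | _ N ih =>
    intro m hmN hm g h heq
    rcases eq_or_ne m.natAbs 1 with h1 | h1
    · -- m = ± 1
      rcases Int.natAbs_eq_iff.mp h1 with hm1 | hm1
      · refine ⟨h, ?_⟩
        rw [hm1] at heq; simpa using heq
      · refine ⟨-h, ?_⟩
        rw [hm1] at heq
        have hg : g = -(P * h) := by
          have := congrArg (fun z => (-1 : ℤ) • z) heq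
          simpa [smul_smul] using this
        rw [hg]; ring
    · -- take a prime factor p of m
      set p : ℕ := m.natAbs.minFac with hp
      have hNpos : m.natAbs ≠ 1 := h1
      have hprime : p.Prime := Nat.minFac_prime hNpos
      haveI : Fact p.Prime := ⟨hprime⟩
      have hpdvd : (p : ℤ) ∣ m := Int.natCast_dvd_natCast.mpr (Nat.minFac_dvd _) |>.trans
        (Int.natAbs_dvd.mpr dvd_rfl)
      obtain ⟨m', hm'⟩ := hpdvd
      -- reduce mod p
      have hphi : phiAux (ZMod p) P * phiAux (ZMod p) h = 0 := by
        rw [← map_mul, ← heq, hm', mul_smul]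
        rw [map_zsmul]
        have hcast : ((p : ℤ) : LaurentPolynomial (ZMod p)) = 0 := by
          push_cast
          rw [show ((p : ℕ) : LaurentPolynomial (ZMod p)) = C ((p : ZMod p)) from
            (map_natCast (C : ZMod p →+* _) p).symm]
          rw [ZMod.natCast_self, map_zero]
        rw [zsmul_eq_mul, hcast, zero_mul]
      have hφh : phiAux (ZMod p) h = 0 := by
        rcases mul_eq_zero.mp hphi with h' | h'
        · exact absurd h' (hP p hprime)
        · exact h'
      obtain ⟨h', hh'⟩ := exists_of_phiAux_eq_zero p h hφh
      -- cancel p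
      have hm'ne : m' ≠ 0 := by
        rintro rfl; rw [mul_zero] at hm'; exact hm hm'
      have hppos : (p : ℤ) ≠ 0 := by
        exact_mod_cast hprime.ne_zero
      have hcancel : m' • g = P * h' := by
        have : (p : ℤ) • (m' • g) = (p : ℤ) • (P * h') := by
          rw [← mul_smul, ← hm', heq, hh', mul_smul_comm]
        have hcast : ((p : ℤ) : LaurentPolynomial ℤ) ≠ 0 := by
          rw [← map_intCast (C : ℤ →+* LaurentPolynomial ℤ) (p : ℤ), ← single_eq_C]
          intro hz
          exact hppos (AddMonoidAlgebra.single_eq_zero.mp hz)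
        have hsub : ((p : ℤ) : LaurentPolynomial ℤ) * (m' • g - P * h') = 0 := by
          rw [mul_sub, ← zsmul_eq_mul, ← zsmul_eq_mul, this, sub_self]
        rcases mul_eq_zero.mp hsub with h' | h'
        · exact absurd h' hcast
        · exact sub_eq_zero.mp h'
      have hlt : m'.natAbs < N := by
        rw [← hmN, hm', Int.natAbs_mul]
        have h2 : 2 ≤ p := hprime.two_le
        have : 0 < m'.natAbs := Int.natAbs_pos.mpr hm'ne
        calc m'.natAbs < 2 * m'.natAbs := by omega
          _ ≤ p * m'.natAbs := Nat.mul_le_mul_right _ h2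
          _ = (p : ℤ).natAbs * m'.natAbs := by rw [Int.natAbs_natCast]
      exact ih m'.natAbs hlt m' rfl hm'ne g h' hcancel

/-- The quotient of the Laurent polynomial ring `ℤ[u,u⁻¹]` by the principal ideal
generated by `P_b = ∏_{k=0}^{n} (1 - u^{-b_k})`, for positive integers `b_k`, is
torsion-free as an additive abelian group. -/
theorem quotient_by_prod_one_sub_T_neg_torsionFree
    (n : ℕ) (b : Fin (n + 1) → ℤ) (hb : ∀ k, 0 < b k)
    (m : ℤ) (hm : m ≠ 0)
    (f : LaurentPolynomial ℤ ⧸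
      Ideal.span {∏ k : Fin (n + 1), ((1 : LaurentPolynomial ℤ) - LaurentPolynomial.T (-(b k)))})
    (hf : m • f = 0) : f = 0 := by
  obtain ⟨g, rfl⟩ := Ideal.Quotient.mk_surjective f
  set P : LaurentPolynomial ℤ :=
    ∏ k : Fin (n + 1), ((1 : LaurentPolynomial ℤ) - LaurentPolynomial.T (-(b k))) with hPdef
  have hmem : m • g ∈ Ideal.span {P} := by
    rw [← Ideal.Quotient.eq_zero_iff_mem]
    rw [map_zsmul]
    exact hf
  obtain ⟨h, hh⟩ := Ideal.mem_span_singleton'.mp hmem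
  have hP : ∀ p : ℕ, p.Prime → phiAux (ZMod p) P ≠ 0 := by
    intro p hp
    haveI : Fact p.Prime := ⟨hp⟩
    rw [hPdef, map_prod]
    refine Finset.prod_ne_zero_iff.mpr fun k _ => ?_
    rw [map_sub, map_one, phiAux_T]
    exact one_sub_T_ne_zero (ZMod p) _ (neg_ne_zero.mpr (hb k).ne')
  have hdvd : P ∣ g := key_aux P hP m.natAbs m rfl hm g h (by rw [← hh]; ring)
  rw [Ideal.Quotient.eq_zero_iff_mem, Ideal.mem_span_singleton]
  exact hdvd
end

section
/- Let n ≥ 0, let b_0,…,b_n be positive integers, and let ℓ = lcm(b_0,…,b_n). For each s ∈ {0,…,ℓ−1}, let A_s denote the quotient ring ℤ[u,u⁻¹]/⟨∏_{k : ℓ ∣ b_k·s}(1 − u^{−b_k})⟩, where the product is over those indices k with ℓ dividing b_k·s. Then the direct sum ⊕_{s=0}^{ℓ−1} A_s is torsion-free as an additive abelian group (a ℤ-module with no torsion). -/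
open Polynomial LaurentPolynomial

lemma quotient_torsionFree (g : ℤ[X]) (hg : g.Monic) (hunit : IsUnit (g.eval 0))
    (m : ℤ) (hm : m ≠ 0) (I : Ideal (LaurentPolynomial ℤ))
    (hI : I = Ideal.span {Polynomial.toLaurent g})
    (x : LaurentPolynomial ℤ ⧸ I)
    (hx : m • x = 0) : x = 0 := by
  subst hI
  haveI := LaurentPolynomial.isLocalization (R := ℤ)
  -- the root of g in AdjoinRoot g is a unit
  have hroot : IsUnit (AdjoinRoot.root g) := by
    obtain ⟨q, hq⟩ : (X : ℤ[X]) ∣ (g - Polynomial.C (g.eval 0)) := by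
      rw [Polynomial.X_dvd_iff]
      simp [Polynomial.coeff_zero_eq_eval_zero]
    have h0 : (Polynomial.aeval (AdjoinRoot.root g)) g = 0 := by
      rw [AdjoinRoot.aeval_eq, AdjoinRoot.mk_self]
    have hgq : g = X * q + Polynomial.C (g.eval 0) := by linear_combination hq
    have key : AdjoinRoot.root g * (Polynomial.aeval (AdjoinRoot.root g)) q
        = -(algebraMap ℤ (AdjoinRoot g) (g.eval 0)) := by
      have h2 := congrArg (Polynomial.aeval (AdjoinRoot.root g)) hgq
      rw [h0] at h2
      simp only [map_add, map_mul, Polynomial.aeval_X, Polynomial.aeval_C] at h2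
      linear_combination -h2
    exact isUnit_of_mul_isUnit_left (key ▸ (hunit.map (algebraMap ℤ (AdjoinRoot g))).neg)
  -- the localization lift φ : ℤ[T,T⁻¹] → AdjoinRoot g
  have hM : ∀ y : Submonoid.powers (X : ℤ[X]),
      IsUnit ((Polynomial.aeval (AdjoinRoot.root g) : ℤ[X] →ₐ[ℤ] AdjoinRoot g).toRingHom y) := by
    rintro ⟨y, k, rfl⟩
    simpa using hroot.pow k
  set φ : LaurentPolynomial ℤ →+* AdjoinRoot g :=
    IsLocalization.lift (M := Submonoid.powers (X : ℤ[X])) hM with hφ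
  have hφeq : ∀ p : ℤ[X], φ (Polynomial.toLaurent p) = AdjoinRoot.mk g p := by
    intro p
    rw [← LaurentPolynomial.algebraMap_eq_toLaurent, hφ, IsLocalization.lift_eq]
    simpa using AdjoinRoot.aeval_eq p
  -- kernel of φ is contained in span {toLaurent g}
  have hker : ∀ p : LaurentPolynomial ℤ, φ p = 0 → p ∈ Ideal.span {Polynomial.toLaurent g} := by
    intro p hp
    obtain ⟨k, p', hp'⟩ := LaurentPolynomial.exists_T_pow p
    have h1 : φ (Polynomial.toLaurent p') = 0 := by
      rw [hp', map_mul, hp, zero_mul]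
    rw [hφeq, AdjoinRoot.mk_eq_zero] at h1
    obtain ⟨r, hr⟩ := h1
    have : p = Polynomial.toLaurent g * (Polynomial.toLaurent r * T (-(k : ℤ))) := by
      have : Polynomial.toLaurent p' * T (-(k : ℤ)) = p := by
        rw [hp', mul_assoc, ← T_add]; simp
      rw [← this, hr, map_mul]; ring
    rw [Ideal.mem_span_singleton]
    exact ⟨_, this⟩
  -- AdjoinRoot g is free over ℤ, hence torsion-free
  haveI : Module.Free ℤ (AdjoinRoot g) := Module.Free.of_basis (AdjoinRoot.powerBasis' hg).basis
  -- conclude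
  obtain ⟨p, rfl⟩ := Ideal.Quotient.mk_surjective (I := Ideal.span {Polynomial.toLaurent g}) x
  have hsp : Polynomial.toLaurent g ∈ Ideal.span {Polynomial.toLaurent g} :=
    Ideal.subset_span rfl
  have hmp : (m : LaurentPolynomial ℤ) * p ∈ Ideal.span {Polynomial.toLaurent g} := by
    rw [← Ideal.Quotient.eq_zero_iff_mem, map_mul, map_intCast, ← zsmul_eq_mul]
    exact hx
  have hφg : φ (Polynomial.toLaurent g) = 0 := by
    rw [hφeq, AdjoinRoot.mk_self]
  have hφmp : φ ((m : LaurentPolynomial ℤ) * p) = 0 := by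
    obtain ⟨r, hr⟩ := Ideal.mem_span_singleton.mp hmp
    rw [hr, map_mul, hφg, zero_mul]
  have hφp : (m : ℤ) • φ p = 0 := by
    rw [map_mul, map_intCast, ← zsmul_eq_mul] at hφmp
    exact hφmp
  have : φ p = 0 := (smul_eq_zero.mp hφp).resolve_left hm
  exact Ideal.Quotient.eq_zero_iff_mem.mpr (hker p this)


/-- For positive integers `b_0, …, b_n` with `ℓ = lcm(b_0, …, b_n)`, the direct sum over
`s ∈ {0, …, ℓ-1}` of the quotient rings
`ℤ[u,u⁻¹] ⧸ ⟨∏_{k : ℓ ∣ b_k s} (1 - u^{-b_k})⟩` is torsion-free as an abelian group. -/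
theorem directSum_sectors_torsionFree
    (n : ℕ) (b : Fin (n + 1) → ℕ) (hb : ∀ k, 0 < b k)
    (ℓ : ℕ) (hℓ : ℓ = Finset.univ.lcm b)
    (m : ℤ) (hm : m ≠ 0)
    (f : DirectSum (Fin ℓ) (fun s => LaurentPolynomial ℤ ⧸
      Ideal.span {∏ k ∈ Finset.univ.filter (fun k => (ℓ : ℤ) ∣ (b k : ℤ) * (s : ℤ)),
        ((1 : LaurentPolynomial ℤ) - LaurentPolynomial.T (-(b k : ℤ)))}))
    (hf : m • f = 0) : f = 0 := by
  refine DFinsupp.ext fun s => ?_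
  set F := Finset.univ.filter (fun k => (ℓ : ℤ) ∣ (b k : ℤ) * (s : ℤ)) with hF
  set g : ℤ[X] := ∏ k ∈ F, (X ^ (b k) - 1) with hg
  have hmonic : g.Monic := by
    refine Polynomial.monic_prod_of_monic _ _ fun k _ => ?_
    simpa using Polynomial.monic_X_pow_sub_C (1 : ℤ) (hb k).ne'
  have hunit : IsUnit (g.eval 0) := by
    have : g.eval 0 = (-1 : ℤ) ^ F.card := by
      rw [hg, Polynomial.eval_prod, ← Finset.prod_const]
      exact Finset.prod_congr rfl fun k _ => by simp [zero_pow (hb k).ne']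
    rw [this]
    exact (isUnit_one.neg).pow _
  have hspan : Ideal.span {∏ k ∈ F, ((1 : LaurentPolynomial ℤ) - LaurentPolynomial.T (-(b k : ℤ)))}
      = Ideal.span {Polynomial.toLaurent g} := by
    have hT : ∀ G : Finset (Fin (n + 1)), LaurentPolynomial.T (∑ k ∈ G, -(b k : ℤ))
        = ∏ k ∈ G, LaurentPolynomial.T (R := ℤ) (-(b k : ℤ)) := by
      intro G
      induction G using Finset.induction with
      | empty => rw [Finset.sum_empty, Finset.prod_empty, LaurentPolynomial.T_zero]
      | insert _ _ hk ih =>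
        rw [Finset.sum_insert hk, Finset.prod_insert hk, LaurentPolynomial.T_add, ih]
    have hgL : Polynomial.toLaurent g
        = ∏ k ∈ F, (LaurentPolynomial.T (b k : ℤ) - 1) := by
      rw [hg, map_prod]
      refine Finset.prod_congr rfl fun k _ => ?_
      simp [Polynomial.toLaurent_X_pow]
    have hprod : ∏ k ∈ F, ((1 : LaurentPolynomial ℤ) - LaurentPolynomial.T (-(b k : ℤ)))
        = LaurentPolynomial.T (∑ k ∈ F, -(b k : ℤ)) * Polynomial.toLaurent g := by
      rw [hgL, hT F, ← Finset.prod_mul_distrib]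
      refine Finset.prod_congr rfl fun k _ => ?_
      rw [mul_sub, mul_one, ← LaurentPolynomial.T_add, neg_add_cancel, LaurentPolynomial.T_zero]
    rw [hprod, Ideal.span_singleton_mul_left_unit (LaurentPolynomial.isUnit_T _)]
  have hfs : m • f s = 0 := by
    calc m • f s = (m • f) s := (DFinsupp.smul_apply _ _ _).symm
    _ = 0 := by rw [hf]; rfl
  exact quotient_torsionFree g hmonic hunit m hm _ hspan (f s) hfs
end

section
/- Let n ≥ 0, let b_0,…,b_n be positive integers, and set P_b = ∏_{k=0}^{n}(1 − u^{−b_k}) in ℤ[u,u⁻¹]. If m is an integer with m ≥ 2 and F ∈ ℤ[u,u⁻¹] satisfies m·F ∈ ⟨P_b⟩ (the principal ideal generated by P_b), then F ∈ ⟨P_b⟩. -/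
open LaurentPolynomial Polynomial

/-- If `m ≥ 2` and `m • F` lies in the principal ideal of `ℤ[u,u⁻¹]` generated by
`P_b = ∏_{k=0}^{n} (1 - u^{-b_k})` (with all `b_k > 0`), then `F` lies in that ideal. -/
theorem mem_span_of_smul_mem_span_prod_one_sub_T_neg
    (n : ℕ) (b : Fin (n + 1) → ℤ) (hb : ∀ k, 0 < b k)
    (m : ℤ) (hm : 2 ≤ m) (F : LaurentPolynomial ℤ)
    (hF : m • F ∈ Ideal.span
      {∏ k : Fin (n + 1), ((1 : LaurentPolynomial ℤ) - LaurentPolynomial.T (-(b k)))}) :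
    F ∈ Ideal.span
      {∏ k : Fin (n + 1), ((1 : LaurentPolynomial ℤ) - LaurentPolynomial.T (-(b k)))} := by
  set P : LaurentPolynomial ℤ := ∏ k : Fin (n + 1), (1 - LaurentPolynomial.T (-(b k))) with hPdef
  rw [Ideal.mem_span_singleton] at hF ⊢
  obtain ⟨G, hG⟩ := hF
  rw [zsmul_eq_mul] at hG
  set PX : ℤ[X] := ∏ k : Fin (n + 1), (X ^ (b k).toNat - 1) with hPXdef
  have hPX_monic : PX.Monic := by
    apply monic_prod_of_monic
    intro k _
    have hk : (b k).toNat ≠ 0 := by have := hb k; omega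
    simpa using monic_X_pow_sub_C (1 : ℤ) hk
  set N : ℤ := ∑ k : Fin (n+1), b k with hNdef
  have hN0 : 0 ≤ N := Finset.sum_nonneg fun k _ => (hb k).le
  have hTprod : ∀ s : Finset (Fin (n+1)),
      ∏ k ∈ s, (LaurentPolynomial.T (b k) : LaurentPolynomial ℤ)
      = LaurentPolynomial.T (∑ k ∈ s, b k) := by
    intro s
    induction s using Finset.induction with
    | empty => simp [T_zero]
    | insert _ _ h ih => rw [Finset.prod_insert h, Finset.sum_insert h, T_add, ih]
  have hPT : Polynomial.toLaurent PX = P * LaurentPolynomial.T N := by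
    rw [hPXdef, map_prod, hPdef, hNdef, ← hTprod, ← Finset.prod_mul_distrib]
    refine Finset.prod_congr rfl fun k _ => ?_
    rw [sub_mul, one_mul, ← T_add, neg_add_cancel, T_zero, map_sub, map_one,
      Polynomial.toLaurent_X_pow, Int.toNat_of_nonneg (hb k).le]
  obtain ⟨nF, FX, hFX⟩ := exists_T_pow F
  obtain ⟨nG, GX, hGX⟩ := exists_T_pow G
  have hcast : ((nG + N.toNat : ℕ) : ℤ) = nG + N := by
    push_cast [Int.toNat_of_nonneg hN0]; ring
  have hmcast : (LaurentPolynomial.C m : LaurentPolynomial ℤ) = (m : LaurentPolynomial ℤ) :=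
    eq_intCast (LaurentPolynomial.C (R := ℤ)) m
  have key : Polynomial.C m * FX * X ^ (nG + N.toNat) = PX * (GX * X ^ nF) := by
    apply Polynomial.toLaurent_injective
    rw [map_mul, map_mul, map_mul, map_mul, Polynomial.toLaurent_C,
      Polynomial.toLaurent_X_pow, Polynomial.toLaurent_X_pow, hFX, hGX, hPT, hcast, hmcast]
    calc (m : LaurentPolynomial ℤ) * (F * LaurentPolynomial.T nF)
          * LaurentPolynomial.T ((nG : ℤ) + N)
        = ((m : LaurentPolynomial ℤ) * F)
          * (LaurentPolynomial.T nF * LaurentPolynomial.T ((nG : ℤ) + N)) := by ring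
      _ = (P * G) * (LaurentPolynomial.T nF * LaurentPolynomial.T ((nG : ℤ) + N)) := by
          rw [hG]
      _ = (P * G) * LaurentPolynomial.T ((nF : ℤ) + ((nG : ℤ) + N)) := by
          rw [← T_add]
      _ = P * LaurentPolynomial.T N
          * (G * LaurentPolynomial.T nG * LaurentPolynomial.T nF) := by
          rw [show ((nF : ℤ) + ((nG : ℤ) + N)) = N + (nG : ℤ) + (nF : ℤ) by ring,
            T_add, T_add]
          ring
  have hmG : Polynomial.C m ∣ GX := by
    rw [Polynomial.C_dvd_iff_dvd_coeff]
    intro i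
    refine dvd_trans ?_ (Polynomial.content_dvd_coeff (p := GX) i)
    have hc : GX.content = normalize m * (FX * X ^ (nG + N.toNat)).content := by
      have h1 : (PX * (GX * X ^ nF)).content = (Polynomial.C m * (FX * X ^ (nG + N.toNat))).content := by
        rw [← key]; ring_nf
      rw [Polynomial.content_mul, hPX_monic.isPrimitive.content_eq_one, one_mul,
        Polynomial.content_mul, Polynomial.content_X_pow, mul_one] at h1
      rw [h1, Polynomial.content_C_mul]
    rw [hc]
    exact Dvd.dvd.mul_right (dvd_normalize_iff.mpr dvd_rfl) _
  obtain ⟨GX', hGX'⟩ := hmG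
  have hmne : (Polynomial.C m : ℤ[X]) ≠ 0 := by
    simp only [ne_eq, Polynomial.C_eq_zero]; omega
  have key2 : FX * X ^ (nG + N.toNat) = PX * (GX' * X ^ nF) := by
    apply mul_left_cancel₀ hmne
    rw [← mul_assoc, key, hGX']; ring
  have hlaur := congrArg Polynomial.toLaurent key2
  rw [map_mul, map_mul, map_mul, Polynomial.toLaurent_X_pow, Polynomial.toLaurent_X_pow,
    hFX, hPT] at hlaur
  set c : ℤ := (nF : ℤ) + ((nG + N.toNat : ℕ) : ℤ) with hcdef
  have h2 : F * LaurentPolynomial.T c = P * (LaurentPolynomial.T N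
      * (Polynomial.toLaurent GX' * LaurentPolynomial.T nF)) := by
    calc F * LaurentPolynomial.T c
        = F * LaurentPolynomial.T nF * LaurentPolynomial.T ((nG + N.toNat : ℕ) : ℤ) := by
          rw [hcdef, T_add]; ring
      _ = P * LaurentPolynomial.T N
          * (Polynomial.toLaurent GX' * LaurentPolynomial.T nF) := hlaur
      _ = P * (LaurentPolynomial.T N
          * (Polynomial.toLaurent GX' * LaurentPolynomial.T nF)) := by ring
  refine ⟨LaurentPolynomial.T N * (Polynomial.toLaurent GX' * LaurentPolynomial.T nF)
    * LaurentPolynomial.T (-c), ?_⟩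
  calc F = F * (LaurentPolynomial.T c * LaurentPolynomial.T (-c)) := by
        rw [← T_add, add_neg_cancel, T_zero, mul_one]
    _ = P * (LaurentPolynomial.T N * (Polynomial.toLaurent GX' * LaurentPolynomial.T nF)
        * LaurentPolynomial.T (-c)) := by
        rw [← mul_assoc, h2]; ring
end

section
/- Let n ≥ 0, let b_0,…,b_n be positive integers, and let ℓ = lcm(b_0,…,b_n) (so ℓ > 0). For s, s' ∈ ZMod ℓ and each index k, define e_k(s,s') = 1 if (b_k·s.val mod ℓ) + (b_k·s'.val mod ℓ) ≥ ℓ and e_k(s,s') = 0 otherwise. On the free ℤ[u,u⁻¹]-module with basis {α_s : s ∈ ZMod ℓ} (i.e., ZMod ℓ →₀ ℤ[u,u⁻¹]), define a ℤ[u,u⁻¹]-bilinear multiplication by α_s ⋆ α_{s'} = (∏_{k=0}^{n}(1 − u^{−b_k})^{e_k(s,s')})·α_{s+s'}. Then this multiplication is commutative and associative, and α_0 is a two-sided multiplicative identity. -/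
/-- The `⋆` product on the Γ-subring of the inertial K-theory of `ℂ^{n+1}` with the
weighted circle action: on the free `ℤ[u,u⁻¹]`-module with basis `{α_s : s ∈ ZMod ℓ}`
(`ℓ = lcm(b_0,…,b_n)`), the bilinear multiplication determined by
`α_s ⋆ α_{s'} = (∏_k (1 - u^{-b_k})^{e_k(s,s')}) • α_{s+s'}` is commutative,
associative, and has `α_0` as a two-sided identity. -/
theorem inertial_star_product_comm_assoc_unital
    (n : ℕ) (b : Fin (n + 1) → ℕ) (hb : ∀ k, 0 < b k)
    (ℓ : ℕ) (hℓ : ℓ = Finset.univ.lcm b)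
    (star : (ZMod ℓ →₀ LaurentPolynomial ℤ) →ₗ[LaurentPolynomial ℤ]
      (ZMod ℓ →₀ LaurentPolynomial ℤ) →ₗ[LaurentPolynomial ℤ]
      (ZMod ℓ →₀ LaurentPolynomial ℤ))
    (hstar : ∀ s s' : ZMod ℓ,
      star (Finsupp.single s 1) (Finsupp.single s' 1) =
        (∏ k : Fin (n + 1),
            ((1 : LaurentPolynomial ℤ) - LaurentPolynomial.T (-(b k : ℤ))) ^
              (if ℓ ≤ (b k * s.val) % ℓ + (b k * s'.val) % ℓ then 1 else 0)) •
          Finsupp.single (s + s') (1 : LaurentPolynomial ℤ)) :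
    (∀ x y, star x y = star y x) ∧
    (∀ x y z, star (star x y) z = star x (star y z)) ∧
    (∀ x, star (Finsupp.single 0 1) x = x) ∧
    (∀ x, star x (Finsupp.single 0 1) = x) := by
  have hℓpos : 0 < ℓ := by
    rw [hℓ, Nat.pos_iff_ne_zero, Ne, Finset.lcm_eq_zero_iff]
    simp only [Set.mem_image, Finset.mem_coe, Finset.mem_univ, true_and, not_exists]
    intro k; exact (hb k).ne'
  haveI : NeZero ℓ := ⟨hℓpos.ne'⟩
  -- the logweight function
  set f : ZMod ℓ → Fin (n + 1) → ℕ := fun s k => (b k * s.val) % ℓ with hf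
  have hflt : ∀ s k, f s k < ℓ := fun s k => Nat.mod_lt _ hℓpos
  have hfadd : ∀ s s' k, f (s + s') k = (f s k + f s' k) % ℓ := by
    intro s s' k
    simp only [hf]
    rw [ZMod.val_add]
    conv_lhs => rw [Nat.mul_mod, Nat.mod_mod_of_dvd _ dvd_rfl, ← Nat.mul_mod]
    rw [Nat.mul_add, Nat.add_mod]
  -- single-level statements
  have hcomm1 : ∀ s s' : ZMod ℓ,
      star (Finsupp.single s 1) (Finsupp.single s' 1) =
      star (Finsupp.single s' 1) (Finsupp.single s 1) := by
    intro s s'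
    rw [hstar, hstar, add_comm s' s]
    congr 1
    exact Finset.prod_congr rfl fun k _ => by rw [Nat.add_comm ((b k * s'.val) % ℓ)]
  have hexp : ∀ (s s' s'' : ZMod ℓ) (k : Fin (n + 1)),
      (if ℓ ≤ f s k + f s' k then 1 else 0) +
        (if ℓ ≤ f (s + s') k + f s'' k then 1 else 0) =
      (if ℓ ≤ f s' k + f s'' k then 1 else 0) +
        (if ℓ ≤ f s k + f (s' + s'') k then 1 else 0) := by
    intro s s' s'' k
    have h1 := hfadd s s' k
    have h2 := hfadd s' s'' k
    have ha := hflt s k; have hb' := hflt s' k; have hc := hflt s'' k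
    rw [h1, h2]
    set A := f s k; set B := f s' k; set C := f s'' k
    have e1 : (A + B) % ℓ = if ℓ ≤ A + B then A + B - ℓ else A + B := by
      split_ifs with h
      · rw [Nat.mod_eq_sub_mod h, Nat.mod_eq_of_lt (by omega)]
      · exact Nat.mod_eq_of_lt (by omega)
    have e2 : (B + C) % ℓ = if ℓ ≤ B + C then B + C - ℓ else B + C := by
      split_ifs with h
      · rw [Nat.mod_eq_sub_mod h, Nat.mod_eq_of_lt (by omega)]
      · exact Nat.mod_eq_of_lt (by omega)
    rw [e1, e2]
    split_ifs <;> omega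
  have hassoc1 : ∀ s s' s'' : ZMod ℓ,
      star (star (Finsupp.single s 1) (Finsupp.single s' 1)) (Finsupp.single s'' 1) =
      star (Finsupp.single s 1) (star (Finsupp.single s' 1) (Finsupp.single s'' 1)) := by
    intro s s' s''
    rw [hstar, hstar, map_smul, LinearMap.smul_apply, map_smul, hstar, hstar,
      smul_smul, smul_smul, ← Finset.prod_mul_distrib, ← Finset.prod_mul_distrib,
      add_assoc]
    congr 1
    refine Finset.prod_congr rfl fun k _ => ?_
    rw [← pow_add, ← pow_add]
    exact congrArg _ (hexp s s' s'' k)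
  have hzval : ((0 : ZMod ℓ)).val = 0 := ZMod.val_zero
  have hunit1 : ∀ s : ZMod ℓ,
      star (Finsupp.single 0 1) (Finsupp.single s 1) = Finsupp.single s 1 := by
    intro s
    rw [hstar]
    have : ∀ k : Fin (n + 1),
        (if ℓ ≤ (b k * (0 : ZMod ℓ).val) % ℓ + (b k * s.val) % ℓ then 1 else 0) = 0 := by
      intro k
      rw [hzval, Nat.mul_zero, Nat.zero_mod, Nat.zero_add, if_neg (not_le.2 (hflt s k))]
    simp only [this, pow_zero, Finset.prod_const_one, one_smul, zero_add]
  have hunit2 : ∀ s : ZMod ℓ,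
      star (Finsupp.single s 1) (Finsupp.single 0 1) = Finsupp.single s 1 := by
    intro s; rw [hcomm1]; exact hunit1 s
  -- rewrite general singles as scalar multiples of basis singles
  have hsingle : ∀ (a : ZMod ℓ) (c : LaurentPolynomial ℤ),
      Finsupp.single a c = c • Finsupp.single a (1 : LaurentPolynomial ℤ) := by
    intro a c; rw [Finsupp.smul_single, smul_eq_mul, mul_one]
  refine ⟨?_, ?_, ?_, ?_⟩
  · -- commutativity
    have : star = star.flip := by
      apply Finsupp.lhom_ext; intro a c
      apply Finsupp.lhom_ext; intro a' c'
      rw [LinearMap.flip_apply, hsingle a c, hsingle a' c']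
      have h1 : star (c • Finsupp.single a 1) (c' • Finsupp.single a' 1) =
          (c * c') • star (Finsupp.single a 1) (Finsupp.single a' 1) := by
        rw [LinearMap.map_smul₂, map_smul, smul_smul]
      have h2 : star (c' • Finsupp.single a' 1) (c • Finsupp.single a 1) =
          (c' * c) • star (Finsupp.single a' 1) (Finsupp.single a 1) := by
        rw [LinearMap.map_smul₂, map_smul, smul_smul]
      rw [h1, h2, hcomm1 a a', mul_comm c c']
    intro x y
    conv_lhs => rw [this]
    rfl
  · -- associativity
    intro x y z
    induction x using Finsupp.induction_linear with
    | zero => simp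
    | add f g hf hg => simp [map_add, hf, hg]
    | single a c =>
      induction y using Finsupp.induction_linear with
      | zero => simp
      | add f g hf hg => simp [map_add, hf, hg]
      | single a' c' =>
        induction z using Finsupp.induction_linear with
        | zero => simp
        | add f g hf hg => simp [map_add, hf, hg]
        | single a'' c'' =>
          rw [hsingle a c, hsingle a' c', hsingle a'' c'']
          simp only [map_smul, LinearMap.smul_apply, map_smul]
          rw [hassoc1]
  · -- left unit
    intro x
    induction x using Finsupp.induction_linear with
    | zero => simp
    | add f g hf hg => rw [map_add, hf, hg]
    | single a c =>
      rw [hsingle a c, map_smul, hunit1]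
  · -- right unit
    intro x
    induction x using Finsupp.induction_linear with
    | zero => simp
    | add f g hf hg => rw [map_add, LinearMap.add_apply, hf, hg]
    | single a c =>
      rw [hsingle a c, map_smul, LinearMap.smul_apply, hunit2]
end
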